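/- Let U : ℝ³ → M₂(ℂ) be differentiable with values in SU(2) and satisfy the even reflection symmetry U(r x) = U(x) for all x ∈ ℝ³. Then the baryon number density is odd under the reflection: b(r x) = −b(x) for all x ∈ ℝ³. -/

import Mathlib

open Matrix

attribute [local instance] Matrix.frobeniusNormedAddCommGroup Matrix.frobeniusNormedSpace

/-- Reflection of `ℝ³` across the plane `{x₃ = 0}`: `(x₁, x₂, x₃) ↦ (x₁, x₂, -x₃)`. -/
def reflPlane : (Fin 3 → ℝ) → (Fin 3 → ℝ) := fun x i => if i = 2 then -x i else x i

noncomputable def reflCLM : (Fin 3 → ℝ) →L[ℝ] (Fin 3 → ℝ) :=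
  LinearMap.toContinuousLinearMap
    { toFun := reflPlane
      map_add' := by
        intro x y; funext i; by_cases h : i = 2 <;> simp [reflPlane, h] <;> ring
      map_smul' := by
        intro c x; funext i; by_cases h : i = 2 <;> simp [reflPlane, h] <;> ring }

lemma reflCLM_apply (x : Fin 3 → ℝ) : reflCLM x = reflPlane x := rfl

lemma reflPlane_invol (x : Fin 3 → ℝ) : reflPlane (reflPlane x) = x := by
  funext i; by_cases h : i = 2 <;> simp [reflPlane, h]

lemma reflPlane_single (i : Fin 3) :
    reflPlane (Pi.single i 1) = if i = 2 then -(Pi.single i (1:ℝ)) else Pi.single i 1 := by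
  by_cases h : i = 2
  · subst h
    funext j
    by_cases hj : j = 2
    · subst hj; simp [reflPlane]
    · simp [reflPlane, hj]
  · simp only [h, if_false]
    funext j
    by_cases hj : j = 2
    · subst hj; simp [reflPlane, Pi.single_eq_of_ne (Ne.symm h)]
    · simp [reflPlane, hj]

theorem stmt16 (U : (Fin 3 → ℝ) → Matrix (Fin 2) (Fin 2) ℂ)
    (hSU : ∀ y, (U y)ᴴ * U y = 1 ∧ (U y).det = 1)
    (hdiff : Differentiable ℝ U)
    (L : (Fin 3 → ℝ) → Fin 3 → Matrix (Fin 2) (Fin 2) ℂ)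
    (hL : ∀ y i, L y i = (U y)ᴴ * fderiv ℝ U y (Pi.single i 1))
    (b : (Fin 3 → ℝ) → ℝ)
    (hb : ∀ x, b x = ∑ σ : Equiv.Perm (Fin 3),
      ((Equiv.Perm.sign σ : ℤ) : ℝ) * ((L x (σ 0) * L x (σ 1) * L x (σ 2)).trace).re)
    (heven : ∀ x, U (reflPlane x) = U x) :
    ∀ x, b (reflPlane x) = -b x := by
  -- chain rule: fderiv at x equals fderiv at reflected point composed with reflection
  have key : ∀ x v, fderiv ℝ U x v = fderiv ℝ U (reflPlane x) (reflPlane v) := by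
    intro x v
    have hfun : U = U ∘ ⇑reflCLM := by
      funext y; simp [Function.comp, reflCLM_apply, heven]
    have h1 : fderiv ℝ U x = fderiv ℝ (U ∘ ⇑reflCLM) x := by rw [← hfun]
    erw [fderiv_comp x (hdiff _) (reflCLM.differentiableAt)] at h1
    rw [reflCLM.fderiv] at h1
    rw [h1]
    rfl
  have key' : ∀ x v, fderiv ℝ U (reflPlane x) v = fderiv ℝ U x (reflPlane v) := by
    intro x v
    rw [key (reflPlane x) v, reflPlane_invol]
  set ε : Fin 3 → ℂ := fun i => if i = 2 then -1 else 1 with hε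
  have hL' : ∀ x i, L (reflPlane x) i = ε i • L x i := by
    intro x i
    rw [hL, hL, heven, key']
    rw [reflPlane_single]
    by_cases h : i = 2
    · simp [hε, h, Matrix.mul_neg]
    · simp [hε, h]
  intro x
  rw [hb, hb, ← Finset.sum_neg_distrib]
  refine Finset.sum_congr rfl (fun σ _ => ?_)
  have hprod : ε (σ 0) * ε (σ 1) * ε (σ 2) = -1 := by
    have h := Equiv.prod_comp σ ε
    rw [Fin.prod_univ_three, Fin.prod_univ_three] at h
    simpa [hε] using h
  have hsc : ∀ (a c d : ℂ) (A B C : Matrix (Fin 2) (Fin 2) ℂ),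
      (a • A) * (c • B) * (d • C) = (a * c * d) • (A * B * C) := by
    intros a c d A B C
    simp only [Matrix.smul_mul, Matrix.mul_smul, smul_smul]
    congr 1
    ring
  rw [hL', hL', hL', hsc, hprod]
  simp only [Matrix.trace_smul, smul_eq_mul, neg_one_mul, Complex.neg_re]
  ring
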